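/- The minimal number of edges in a connected simple graph with cycle rank k, denoted C_k, satisfies C_0 = 0 and C_k = floor(k + (3 + sqrt(8k - 7))/2) for k ≥ 1. -/

import Mathlib

open SimpleGraph

section Aux
open Finset

/-- rank of pair (i,j) with i < j < n in the edge enumeration of K_n. -/
def rnk (n i j : ℕ) : ℕ := if i = 0 then j - 1 else (n - 1) + ((j-1).choose 2 + (i-1))

def pairsD (n : ℕ) : Finset (ℕ × ℕ) :=
  (Finset.range n ×ˢ Finset.range n).filter fun p => p.1 < p.2

lemma mem_pairsD {n : ℕ} {p : ℕ × ℕ} : p ∈ pairsD n ↔ p.1 < p.2 ∧ p.2 < n := by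
  simp only [pairsD, Finset.mem_filter, Finset.mem_product, Finset.mem_range]
  constructor
  · rintro ⟨⟨_, h2⟩, h3⟩; exact ⟨h3, h2⟩
  · rintro ⟨h1, h2⟩; exact ⟨⟨by omega, h2⟩, h1⟩

lemma choose_two_succ (j : ℕ) : (j+1).choose 2 = j.choose 2 + j := by
  rw [Nat.choose_succ_succ]
  simp [Nat.choose_one_right]; omega

lemma card_pairsD (n : ℕ) : (pairsD n).card = n.choose 2 := by
  induction n with
  | zero => simp [pairsD]
  | succ n ih =>
    have hsplit : pairsD (n+1) = pairsD n ∪ (Finset.range n).image (fun i => (i, n)) := by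
      ext p
      simp only [mem_pairsD, Finset.mem_union, Finset.mem_image, Finset.mem_range]
      constructor
      · rintro ⟨h1, h2⟩
        rcases Nat.lt_or_ge p.2 n with h | h
        · exact Or.inl ⟨h1, h⟩
        · right; exact ⟨p.1, by omega, by have : p.2 = n := by omega
                                          rw [← this]⟩
      · rintro (⟨h1, h2⟩ | ⟨i, hi, rfl⟩) <;> simp_all <;> omega
    have hdisj : Disjoint (pairsD n) ((Finset.range n).image (fun i => (i, n))) := by
      rw [Finset.disjoint_left]
      rintro p hp hq
      simp only [Finset.mem_image, Finset.mem_range] at hq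
      obtain ⟨i, hi, rfl⟩ := hq
      rw [mem_pairsD] at hp; omega
    rw [hsplit, Finset.card_union_of_disjoint hdisj, ih,
      Finset.card_image_of_injective _ (fun a b h => by simpa using (Prod.ext_iff.1 h).1),
      Finset.card_range, choose_two_succ]

lemma rnk_lt {n i j : ℕ} (h1 : i < j) (h2 : j < n) : rnk n i j < n.choose 2 := by
  have hc : n.choose 2 = (n-1).choose 2 + (n-1) := by
    obtain ⟨n, rfl⟩ : ∃ m, n = m + 1 := ⟨n - 1, by omega⟩
    simp [choose_two_succ]
  rcases Nat.eq_zero_or_pos i with rfl | hi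
  · rw [rnk, if_pos rfl]
    have : 1 ≤ (n-1).choose 2 + 1 := by omega
    omega
  · rw [rnk, if_neg (by omega)]
    have hj2 : (j-1).choose 2 + (i-1) < (n-1).choose 2 := by
      have h3 : (j-1).choose 2 + (i - 1) < j.choose 2 := by
        have : j.choose 2 = (j-1).choose 2 + (j-1) := by
          obtain ⟨j', rfl⟩ : ∃ m, j = m + 1 := ⟨j - 1, by omega⟩
          simp [choose_two_succ]
        omega
      have h4 : j.choose 2 ≤ (n-1).choose 2 := Nat.choose_le_choose 2 (by omega)
      omega
    omega

lemma rnk_injOn {n : ℕ} {i j i' j' : ℕ} (h1 : i < j) (h2 : j < n) (h1' : i' < j') (h2' : j' < n)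
    (heq : rnk n i j = rnk n i' j') : i = i' ∧ j = j' := by
  have key : ∀ a b a' b' : ℕ, 1 ≤ a → a < b → 1 ≤ a' → a' < b' → b ≤ b' →
      (b-1).choose 2 + (a-1) = (b'-1).choose 2 + (a'-1) → a = a' ∧ b = b' := by
    intro a b a' b' ha hab ha' hab' hbb' he
    rcases Nat.eq_or_lt_of_le hbb' with rfl | hlt
    · omega
    · exfalso
      have hb : b.choose 2 = (b-1).choose 2 + (b-1) := by
        obtain ⟨b'', rfl⟩ : ∃ m, b = m + 1 := ⟨b - 1, by omega⟩
        simp [choose_two_succ]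
      have : b.choose 2 ≤ (b'-1).choose 2 := Nat.choose_le_choose 2 (by omega)
      omega
  rcases Nat.eq_zero_or_pos i with rfl | hi <;> rcases Nat.eq_zero_or_pos i' with rfl | hi'
  · rw [rnk, if_pos rfl, rnk, if_pos rfl] at heq; omega
  · rw [rnk, if_pos rfl, rnk, if_neg (by omega)] at heq; omega
  · rw [rnk, if_neg (by omega), rnk, if_pos rfl] at heq; omega
  · rw [rnk, if_neg (by omega), rnk, if_neg (by omega)] at heq
    rcases Nat.le_total j j' with h | h
    · exact key i j i' j' hi h1 hi' h1' h (by omega)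
    · have := key i' j' i j hi' h1' hi h1 h (by omega); omega

-- the filtered pair set has card m
lemma card_pairs_filter {n m : ℕ} (hm : m ≤ n.choose 2) :
    ((pairsD n).filter fun p => rnk n p.1 p.2 < m).card = m := by
  classical
  set r : ℕ × ℕ → ℕ := fun p => rnk n p.1 p.2 with hr
  have hinj : Set.InjOn r (pairsD n) := by
    intro p hp q hq hpq
    rw [Finset.mem_coe, mem_pairsD] at hp hq
    have := rnk_injOn hp.1 hp.2 hq.1 hq.2 hpq
    exact Prod.ext this.1 this.2
  have himg : (pairsD n).image r = Finset.range (n.choose 2) := by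
    apply Finset.eq_of_subset_of_card_le
    · intro t ht
      simp only [Finset.mem_image] at ht
      obtain ⟨p, hp, rfl⟩ := ht
      rw [mem_pairsD] at hp
      exact Finset.mem_range.2 (rnk_lt hp.1 hp.2)
    · rw [Finset.card_range, Finset.card_image_of_injOn hinj, card_pairsD]
  have hsub : Set.InjOn r ((pairsD n).filter fun p => r p < m) :=
    hinj.mono (by intro x hx; rw [Finset.mem_coe, Finset.mem_filter] at hx; exact hx.1)
  rw [← Finset.card_image_of_injOn hsub]
  have : ((pairsD n).filter fun p => r p < m).image r = Finset.range m := by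
    apply Finset.Subset.antisymm
    · intro t ht
      simp only [Finset.mem_image, Finset.mem_filter] at ht
      obtain ⟨p, ⟨_, hp2⟩, rfl⟩ := ht
      exact Finset.mem_range.2 hp2
    · intro t ht
      rw [Finset.mem_range] at ht
      have : t ∈ (pairsD n).image r := himg ▸ Finset.mem_range.2 (by omega)
      simp only [Finset.mem_image] at this ⊢
      obtain ⟨p, hp, rfl⟩ := this
      exact ⟨p, Finset.mem_filter.2 ⟨hp, ht⟩, rfl⟩
  rw [this, Finset.card_range]



def UG (n m : ℕ) : SimpleGraph (Fin n) where
  Adj a b := a ≠ b ∧ rnk n (min a.val b.val) (max a.val b.val) < m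
  symm := ⟨by
    rintro a b ⟨h1, h2⟩
    exact ⟨h1.symm, by rwa [min_comm, max_comm]⟩⟩
  loopless := ⟨fun a h => h.1 rfl⟩

instance (n m : ℕ) : DecidableRel (UG n m).Adj := fun a b => by
  unfold UG; simp only; infer_instance

lemma UG_connected {n m : ℕ} (hn : 1 ≤ n) (hm : n - 1 ≤ m) : (UG n m).Connected := by
  have hz : (0:ℕ) < n := hn
  set z : Fin n := ⟨0, hz⟩ with hzdef
  have hadj : ∀ v : Fin n, v ≠ z → (UG n m).Adj z v := by
    intro v hv
    have hv' : 1 ≤ v.val := by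
      rcases Nat.eq_zero_or_pos v.val with h | h
      · exact absurd (Fin.ext h) hv
      · exact h
    refine ⟨fun h => hv h.symm, ?_⟩
    have : min z.val v.val = 0 := by simp [hzdef]
    rw [this]
    have hmax : max z.val v.val = v.val := by simp [hzdef]
    rw [hmax, rnk, if_pos rfl]
    have := v.isLt
    omega
  have : Nonempty (Fin n) := ⟨z⟩
  rw [connected_iff]
  refine ⟨?_, this⟩
  · intro u v
    rcases eq_or_ne u z with hu | hu
    · rcases eq_or_ne v z with hv | hv
      · exact (hu.trans hv.symm) ▸ Reachable.refl _
      · exact hu ▸ (hadj v hv).reachable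
    · rcases eq_or_ne v z with rfl | hv
      · exact (hadj u hu).reachable.symm
      · exact ((hadj u hu).reachable.symm).trans (hadj v hv).reachable


-- lower bound lemma: connected implies N ≤ edges + 1
lemma conn_lb {N : ℕ} (G : SimpleGraph (Fin N)) [Fintype G.edgeSet]
    (hc : G.Connected) (z : Fin N) : N ≤ G.edgeFinset.card + 1 := by
  have key : ∀ v : Fin N, v ≠ z → ∃ u, G.Adj v u ∧ G.dist u z < G.dist v z := by
    intro v hv
    obtain ⟨w, hw⟩ := hc.exists_walk_length_eq_dist v z
    cases w with
    | nil => exact absurd hw.symm (by simpa using (hc.pos_dist_of_ne hv).ne')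
    | cons h p =>
      exact ⟨_, h, by have := G.dist_le p; simp [Walk.length_cons] at hw; omega⟩
  classical
  have hcard : (univ.erase z).card ≤ G.edgeFinset.card := by
    apply Finset.card_le_card_of_injOn
      (fun v => if h : v = z then s(z,z) else s(v, (key v h).choose))
    · intro v hv
      rw [Finset.mem_coe, Finset.mem_erase] at hv
      beta_reduce
      rw [dif_neg hv.1]
      exact mem_edgeFinset.2 (key v hv.1).choose_spec.1
    · intro a ha b hb hab
      simp only [Finset.coe_erase, Set.mem_diff, Finset.mem_coe, Set.mem_singleton_iff, Finset.mem_erase] at ha hb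
      simp only at hab
      rw [dif_neg ha.2, dif_neg hb.2, Sym2.eq_iff] at hab
      rcases hab with ⟨h1, h2⟩ | ⟨h1, h2⟩
      · exact h1
      · exfalso
        have h3 := (key a ha.2).choose_spec.2
        have h4 := (key b hb.2).choose_spec.2
        rw [h2] at h3; rw [← h1] at h4; omega
  have : (univ.erase z).card = N - 1 := by simp [Finset.card_erase_of_mem]
  have hN : 1 ≤ N := Fin.pos z
  omega


lemma UG_card_edges {n m : ℕ} (hm : m ≤ n.choose 2) :
    (UG n m).edgeFinset.card = m := by
  classical
  suffices h2 : (UG n m).edgeFinset.card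
      = ((pairsD n).filter fun p => rnk n p.1 p.2 < m).card by
    rw [h2, card_pairs_filter hm]
  symm
  apply Finset.card_bij (fun p hp => s((⟨p.1, by
      rw [Finset.mem_filter, mem_pairsD] at hp; omega⟩ : Fin n), (⟨p.2, by
      rw [Finset.mem_filter, mem_pairsD] at hp; omega⟩ : Fin n)))
  · intro p hp
    rw [Finset.mem_filter, mem_pairsD] at hp
    rw [mem_edgeFinset, mem_edgeSet]
    refine ⟨fun h => ?_, ?_⟩
    · have := Fin.mk.injEq (n := n) p.1 _ p.2 _ ▸ h
      simp only [Fin.mk.injEq] at h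
      omega
    · simp only
      rw [min_eq_left (le_of_lt hp.1.1), max_eq_right (le_of_lt hp.1.1)]
      exact hp.2
  · intro p hp q hq h
    rw [Finset.mem_filter, mem_pairsD] at hp hq
    rw [Sym2.eq_iff] at h
    rcases h with ⟨h1, h2⟩ | ⟨h1, h2⟩ <;>
      simp only [Fin.mk.injEq] at h1 h2 <;>
      [skip; omega] <;> exact Prod.ext h1 h2
  · intro e he
    rw [mem_edgeFinset] at he
    induction e with
    | _ a b =>
      rw [mem_edgeSet] at he
      obtain ⟨hne, hlt⟩ := he
      have hne' : a.val ≠ b.val := fun h => hne (Fin.ext h)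
      rcases Nat.lt_or_ge a.val b.val with h | h
      · refine ⟨(a.val, b.val), ?_, ?_⟩
        · rw [Finset.mem_filter, mem_pairsD]
          refine ⟨⟨h, b.isLt⟩, ?_⟩
          rwa [min_eq_left (le_of_lt h), max_eq_right (le_of_lt h)] at hlt
        · simp [Fin.eta]
      · have h' : b.val < a.val := by omega
        refine ⟨(b.val, a.val), ?_, ?_⟩
        · rw [Finset.mem_filter, mem_pairsD]
          refine ⟨⟨h', a.isLt⟩, ?_⟩
          rw [show a.val ⊓ b.val = b.val by omega, show a.val ⊔ b.val = a.val by omega] at hlt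
          exact hlt
        · simp only [Fin.eta]
          exact Sym2.eq_swap

end Aux

/-- `EdgeCount m k` says there is a connected finite simple graph with `m` edges
and cycle rank `|E| - |V| + 1 = k` (expressed as `m + 1 = N + k`). -/
def EdgeCount (m k : ℕ) : Prop :=
  ∃ (N : ℕ) (G : SimpleGraph (Fin N)) (_ : Fintype G.edgeSet),
    G.Connected ∧ G.edgeFinset.card = m ∧ m + 1 = N + k

/-- `Cmin k` is the minimal number of edges of a connected simple graph with cycle rank `k`. -/
noncomputable def Cmin (k : ℕ) : ℕ := sInf {m | EdgeCount m k}

lemma two_mul_choose_two_succ (r : ℕ) : 2 * (r+1).choose 2 = (r+1) * r := by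
  induction r with
  | zero => simp
  | succ r ih =>
    rw [choose_two_succ, Nat.mul_add, ih]
    ring

lemma edgeCount_iff {m k : ℕ} :
    EdgeCount m k ↔ ∃ n, 1 ≤ n ∧ m + 1 = n + k ∧ n - 1 ≤ m ∧ m ≤ n.choose 2 := by
  constructor
  · rintro ⟨N, G, inst, hc, hcard, heq⟩
    have hN : 1 ≤ N := by
      have : Nonempty (Fin N) := hc.nonempty
      exact Fin.pos this.some
    refine ⟨N, hN, heq, ?_, ?_⟩
    · have := conn_lb G hc ⟨0, hN⟩; omega
    · have := G.card_edgeFinset_le_card_choose_two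
      rwa [hcard, Fintype.card_fin] at this
  · rintro ⟨n, hn, heq, hle, hub⟩
    classical
    exact ⟨n, UG n m, inferInstance, UG_connected hn hle, UG_card_edges hub, heq⟩

lemma cmin_eq (k : ℕ) : ∃ r : ℕ, k ≤ r.choose 2 ∧ (∀ r' < r, ¬ k ≤ r'.choose 2) ∧
    Cmin k = k + r := by
  have hex : ∃ r : ℕ, k ≤ r.choose 2 := by
    rcases Nat.eq_zero_or_pos k with rfl | hk
    · exact ⟨0, by simp⟩
    · refine ⟨2 * k, ?_⟩
      obtain ⟨k', rfl⟩ : ∃ a, k = a + 1 := ⟨k - 1, by omega⟩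
      have h := two_mul_choose_two_succ (2 * (k' + 1) - 1)
      have h2 : 2 * (k' + 1) - 1 + 1 = 2 * (k' + 1) := by omega
      rw [h2] at h
      nlinarith
  refine ⟨Nat.find hex, Nat.find_spec hex, fun r' h => Nat.find_min hex h, ?_⟩
  have hmem : EdgeCount (k + Nat.find hex) k := by
    rw [edgeCount_iff]
    refine ⟨Nat.find hex + 1, by omega, by omega, by omega, ?_⟩
    rw [choose_two_succ]
    have := Nat.find_spec hex
    omega
  have hlb : ∀ m, EdgeCount m k → k + Nat.find hex ≤ m := by
    intro m hm
    rw [edgeCount_iff] at hm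
    obtain ⟨n, hn, heq, hle, hub⟩ := hm
    have hk : k ≤ (n - 1).choose 2 := by
      have h2 : n.choose 2 = (n-1).choose 2 + (n-1) := by
        obtain ⟨n', rfl⟩ : ∃ a, n = a + 1 := ⟨n - 1, by omega⟩
        simp [choose_two_succ]
      omega
    have : Nat.find hex ≤ n - 1 := Nat.find_min' hex hk
    omega
  have h1 : Cmin k ≤ k + Nat.find hex := Nat.sInf_le hmem
  have hne : {m | EdgeCount m k}.Nonempty := ⟨k + Nat.find hex, hmem⟩
  have h2 : k + Nat.find hex ≤ Cmin k := hlb _ (Nat.sInf_mem hne)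
  omega

theorem stmt_6 :
    Cmin 0 = 0 ∧
      ∀ k : ℕ, 1 ≤ k →
        (Cmin k : ℤ) = ⌊(k : ℝ) + (3 + Real.sqrt (8 * (k : ℝ) - 7)) / 2⌋ := by
  constructor
  · obtain ⟨r, h1, h2, h3⟩ := cmin_eq 0
    have : r = 0 := by
      by_contra h
      exact h2 0 (by omega) (by simp)
    omega
  · intro k hk
    obtain ⟨r, h1, h2, h3⟩ := cmin_eq k
    have hr2 : 2 ≤ r := by
      by_contra h
      interval_cases r <;> simp_all
    obtain ⟨s, rfl⟩ : ∃ s, r = s + 2 := ⟨r - 2, by omega⟩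
    obtain ⟨t, rfl⟩ : ∃ t, k = t + 1 := ⟨k - 1, by omega⟩
    obtain ⟨c, hc⟩ := (Nat.even_mul_succ_self s)
    -- hc : s * (s + 1) = c + c
    have hA : s * (s + 1) ≤ 2 * t := by
      have hm := two_mul_choose_two_succ s
      have := h2 (s + 1) (by omega)
      have he : (s+1) * s = s * (s+1) := by ring
      omega
    have hB : t ≤ c + s := by
      have hm := two_mul_choose_two_succ (s + 1)
      rw [show s+1+1 = s+2 from rfl] at hm
      have he : (s+2) * (s+1) = s * (s+1) + 2*s + 2 := by ring
      omega
    have hA' : c + c ≤ 2 * t := by omega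
    have e1 : (2*s+1)^2 = 4*(s*(s+1)) + 1 := by ring
    have e2 : (2*s+3)^2 = 4*(s*(s+1)) + 8*s + 9 := by ring
    have hnat1 : (2*s+1)^2 ≤ 8*(t+1) - 7 := by rw [e1, hc]; omega
    have hnat2 : 8*(t+1) - 7 < (2*s+3)^2 := by rw [e2, hc]; omega
    rw [h3]
    symm
    rw [Int.floor_eq_iff]
    have h87 : (0:ℝ) ≤ 8 * ((t+1 : ℕ):ℝ) - 7 := by push_cast; linarith
    have h87' : (8 * ((t+1:ℕ)) - 7 : ℕ) = 8*(t+1)-7 := rfl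
    have hcast87 : ((8*(t+1) - 7 : ℕ) : ℝ) = 8 * ((t+1:ℕ):ℝ) - 7 := by
      have : 7 ≤ 8 * (t+1) := by omega
      push_cast [this]; ring
    have hsqle : ((2*s+1 : ℕ) : ℝ) ≤ Real.sqrt (8 * ((t+1:ℕ):ℝ) - 7) := by
      rw [Real.le_sqrt (by positivity) h87]
      calc ((2*s+1 : ℕ):ℝ)^2 = (((2*s+1)^2 : ℕ) : ℝ) := by push_cast; ring
        _ ≤ ((8*(t+1) - 7 : ℕ) : ℝ) := by exact_mod_cast hnat1
        _ = 8 * ((t+1:ℕ):ℝ) - 7 := hcast87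
    have hsqlt : Real.sqrt (8 * ((t+1:ℕ):ℝ) - 7) < ((2*s+3 : ℕ) : ℝ) := by
      rw [Real.sqrt_lt' (by positivity)]
      calc 8 * ((t+1:ℕ):ℝ) - 7 = ((8*(t+1) - 7 : ℕ) : ℝ) := hcast87.symm
        _ < (((2*s+3)^2 : ℕ) : ℝ) := by exact_mod_cast hnat2
        _ = ((2*s+3:ℕ):ℝ)^2 := by push_cast; ring
    constructor
    · push_cast at hsqle ⊢
      linarith
    · push_cast at hsqlt ⊢
      linarith
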